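/- Let G₁, G₂ be finite simple graphs with |V(G₁)| = |V(G₂)| = n and suppose there exists, in some unital C*-algebra A with A ≠ 0, a bi-unitary matrix U = (u_{a,x}) indexed by V(G₂) × V(G₁) satisfying the orthogonality conditions u_{a,x} u_{b,y}^* = 0 whenever exactly one of the relations (a ~ b in G₂) and (x ~ y in G₁) holds. Then for every k, the number of vertices of degree k in G₁ equals the number of vertices of degree k in G₂. -/

import Mathlib

/-- existence of a bi-unitary matrix over a nonzero unital
C*-algebra satisfying the orthogonality conditions for a pair of graphs forces
the degree sequences of the two graphs to coincide. -/
theorem stmt8 {A : Type*} [NormedRing A] [StarRing A] [CStarRing A]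
    [CompleteSpace A] [NormedAlgebra ℂ A] [StarModule ℂ A] [Nontrivial A]
    (n : ℕ) (G₁ G₂ : SimpleGraph (Fin n))
    [DecidableRel G₁.Adj] [DecidableRel G₂.Adj]
    (u : Fin n → Fin n → A)
    (hUU : ∀ a b : Fin n, ∑ x, u a x * star (u b x) = if a = b then 1 else 0)
    (hUU' : ∀ x y : Fin n, ∑ a, star (u a x) * u a y = if x = y then 1 else 0)
    (hUt : ∀ x y : Fin n, ∑ a, u a x * star (u a y) = if x = y then 1 else 0)
    (hUt' : ∀ a b : Fin n, ∑ x, star (u a x) * u b x = if a = b then 1 else 0)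
    (horth : ∀ a b x y : Fin n,
      ((G₂.Adj a b ∧ ¬ G₁.Adj x y) ∨ (¬ G₂.Adj a b ∧ G₁.Adj x y)) →
      u a x * star (u b y) = 0) :
    ∀ k : ℕ,
      (Finset.univ.filter fun x : Fin n => G₁.degree x = k).card =
      (Finset.univ.filter fun a : Fin n => G₂.degree a = k).card := by
  classical
  letI : CStarAlgebra A := { }
  letI := CStarAlgebra.spectralOrder A
  haveI := CStarAlgebra.spectralOrderedRing A
  set d₁ : Fin n → ℕ := fun x => G₁.degree x with hd₁def
  set d₂ : Fin n → ℕ := fun a => G₂.degree a with hd₂def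
  set e : Fin n → Fin n → A := fun a x => star (u a x) * u a x with hedef
  have he_nonneg : ∀ a x, (0:A) ≤ e a x := fun a x => star_mul_self_nonneg _
  have hrow : ∀ x, ∑ a, e a x = 1 := by
    intro x; simpa [hedef] using hUU' x x
  have hcol : ∀ a, ∑ x, e a x = 1 := by
    intro a; simpa [hedef] using hUt' a a
  -- degrees as sums of indicators
  have hdeg1 : ∀ x, d₁ x = ∑ y, (if G₁.Adj x y then 1 else 0 : ℕ) := by
    intro x
    simp [hd₁def, SimpleGraph.degree, SimpleGraph.neighborFinset_eq_filter,
      Finset.sum_boole]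
  have hdeg1' : ∀ y, d₁ y = ∑ x, (if G₁.Adj x y then 1 else 0 : ℕ) := by
    intro y
    rw [hdeg1 y]
    exact Finset.sum_congr rfl fun x _ => by simp [SimpleGraph.adj_comm]
  have hdeg2 : ∀ a, d₂ a = ∑ b, (if G₂.Adj a b then 1 else 0 : ℕ) := by
    intro a
    simp [hd₂def, SimpleGraph.degree, SimpleGraph.neighborFinset_eq_filter,
      Finset.sum_boole]
  have hdeg2' : ∀ b, d₂ b = ∑ a, (if G₂.Adj a b then 1 else 0 : ℕ) := by
    intro b
    rw [hdeg2 b]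
    exact Finset.sum_congr rfl fun a _ => by simp [SimpleGraph.adj_comm]
  -- the key pointwise identity from orthogonality
  have key : ∀ a b x y : Fin n,
      (if G₂.Adj a b then 1 else 0 : ℕ) • (e a x * e b y) =
      (if G₁.Adj x y then 1 else 0 : ℕ) • (e a x * e b y) := by
    intro a b x y
    have hassoc : e a x * e b y = star (u a x) * ((u a x * star (u b y)) * u b y) := by
      simp [hedef, mul_assoc]
    by_cases h2 : G₂.Adj a b <;> by_cases h1 : G₁.Adj x y
    · simp [h1, h2]
    · have h0 : u a x * star (u b y) = 0 := horth a b x y (Or.inl ⟨h2, h1⟩)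
      rw [hassoc, h0]; simp
    · have h0 : u a x * star (u b y) = 0 := horth a b x y (Or.inr ⟨h2, h1⟩)
      rw [hassoc, h0]; simp
    · simp [h1, h2]
  have sum_rot : ∀ (F : Fin n → Fin n → Fin n → A),
      ∑ a, ∑ b, ∑ y, F a b y = ∑ y, ∑ b, ∑ a, F a b y := by
    intro F
    calc ∑ a, ∑ b, ∑ y, F a b y
        = ∑ a, ∑ y, ∑ b, F a b y := Finset.sum_congr rfl fun a _ => Finset.sum_comm
      _ = ∑ y, ∑ a, ∑ b, F a b y := Finset.sum_comm
      _ = ∑ y, ∑ b, ∑ a, F a b y := Finset.sum_congr rfl fun y _ => Finset.sum_comm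
  -- identity (I): d₁ x • 1 = ∑ a, d₂ a • e a x
  have hI : ∀ x, (d₁ x) • (1:A) = ∑ a, (d₂ a) • e a x := by
    intro x
    symm
    have step1 : ∀ a b : Fin n, (if G₂.Adj a b then 1 else 0 : ℕ) • e a x
        = ∑ y, (if G₂.Adj a b then 1 else 0 : ℕ) • (e a x * e b y) := by
      intro a b
      rw [← Finset.smul_sum, ← Finset.mul_sum, hcol b, mul_one]
    calc ∑ a, (d₂ a) • e a x
        = ∑ a, ∑ b, (if G₂.Adj a b then 1 else 0 : ℕ) • e a x := by
          refine Finset.sum_congr rfl fun a _ => ?_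
          rw [hdeg2 a, Finset.sum_smul]
      _ = ∑ a, ∑ b, ∑ y, (if G₂.Adj a b then 1 else 0 : ℕ) • (e a x * e b y) := by
          refine Finset.sum_congr rfl fun a _ => Finset.sum_congr rfl fun b _ => step1 a b
      _ = ∑ a, ∑ b, ∑ y, (if G₁.Adj x y then 1 else 0 : ℕ) • (e a x * e b y) := by
          refine Finset.sum_congr rfl fun a _ => Finset.sum_congr rfl fun b _ =>
            Finset.sum_congr rfl fun y _ => key a b x y
      _ = ∑ y, ∑ b, ∑ a, (if G₁.Adj x y then 1 else 0 : ℕ) • (e a x * e b y) :=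
          sum_rot _
      _ = ∑ y, (if G₁.Adj x y then 1 else 0 : ℕ) • (1:A) := by
          refine Finset.sum_congr rfl fun y _ => ?_
          rw [show ∑ b, ∑ a, (if G₁.Adj x y then 1 else 0 : ℕ) • (e a x * e b y)
              = ∑ b, (if G₁.Adj x y then 1 else 0 : ℕ) • e b y from
            Finset.sum_congr rfl fun b _ => by
              rw [← Finset.smul_sum, ← Finset.sum_mul, hrow x, one_mul]]
          rw [← Finset.smul_sum, hrow y]
      _ = (d₁ x) • (1:A) := by rw [hdeg1 x, Finset.sum_smul]
  -- identity (II): d₂ b • 1 = ∑ y, d₁ y • e b y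
  have hII : ∀ b, (d₂ b) • (1:A) = ∑ y, (d₁ y) • e b y := by
    intro b
    symm
    calc ∑ y, (d₁ y) • e b y
        = ∑ y, ∑ x, (if G₁.Adj x y then 1 else 0 : ℕ) • e b y := by
          refine Finset.sum_congr rfl fun y _ => ?_
          rw [hdeg1' y, Finset.sum_smul]
      _ = ∑ y, ∑ x, ∑ a, (if G₁.Adj x y then 1 else 0 : ℕ) • (e a x * e b y) := by
          refine Finset.sum_congr rfl fun y _ => Finset.sum_congr rfl fun x _ => ?_
          rw [← Finset.smul_sum, ← Finset.sum_mul, hrow x, one_mul]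
      _ = ∑ y, ∑ x, ∑ a, (if G₂.Adj a b then 1 else 0 : ℕ) • (e a x * e b y) := by
          refine Finset.sum_congr rfl fun y _ => Finset.sum_congr rfl fun x _ =>
            Finset.sum_congr rfl fun a _ => (key a b x y).symm
      _ = ∑ a, ∑ x, ∑ y, (if G₂.Adj a b then 1 else 0 : ℕ) • (e a x * e b y) :=
          sum_rot _
      _ = ∑ a, (if G₂.Adj a b then 1 else 0 : ℕ) • (1:A) := by
          refine Finset.sum_congr rfl fun a _ => ?_
          rw [show ∑ x, ∑ y, (if G₂.Adj a b then 1 else 0 : ℕ) • (e a x * e b y)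
              = ∑ x, (if G₂.Adj a b then 1 else 0 : ℕ) • e a x from
            Finset.sum_congr rfl fun x _ => by
              rw [← Finset.smul_sum, ← Finset.mul_sum, hcol b, mul_one]]
          rw [← Finset.smul_sum, hcol a]
      _ = (d₂ b) • (1:A) := by rw [hdeg2' b, Finset.sum_smul]
  -- AM-GM type sum identity over pairs
  set f : Fin n × Fin n → A := fun p => (2 * (d₁ p.2 * d₂ p.1)) • e p.1 p.2 with hfdef
  set g : Fin n × Fin n → A := fun p => ((d₁ p.2)^2 + (d₂ p.1)^2) • e p.1 p.2 with hgdef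
  have hfg_le : ∀ p ∈ (Finset.univ : Finset (Fin n × Fin n)), f p ≤ g p := by
    intro p _
    have hc : 2 * (d₁ p.2 * d₂ p.1) ≤ (d₁ p.2)^2 + (d₂ p.1)^2 := by
      rw [← mul_assoc]; exact two_mul_le_add_sq _ _
    have : ((d₁ p.2)^2 + (d₂ p.1)^2) • e p.1 p.2 =
        (((d₁ p.2)^2 + (d₂ p.1)^2) - 2 * (d₁ p.2 * d₂ p.1)) • e p.1 p.2
          + (2 * (d₁ p.2 * d₂ p.1)) • e p.1 p.2 := by
      rw [← add_smul, Nat.sub_add_cancel hc]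
    rw [hgdef]
    simp only []
    rw [this]
    exact le_add_of_nonneg_left (nsmul_nonneg (he_nonneg _ _) _)
  -- the two sums are equal
  have hP2Q : ∑ x, (2 * (d₁ x)^2) • (1:A) = ∑ a, (2 * (d₂ a)^2) • (1:A) := by
    have h1 : ∑ p : Fin n × Fin n, f p = ∑ a, (2 * (d₂ a)^2) • (1:A) := by
      rw [Fintype.sum_prod_type]
      refine Finset.sum_congr rfl fun a _ => ?_
      dsimp only [f]
      calc ∑ x, (2 * (d₁ x * d₂ a)) • e a x
          = ∑ x, (2 * d₂ a) • ((d₁ x) • e a x) := by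
            refine Finset.sum_congr rfl fun x _ => ?_
            rw [smul_smul]; congr 1; ring
        _ = (2 * d₂ a) • ((d₂ a) • (1:A)) := by rw [← Finset.smul_sum, ← hII a]
        _ = (2 * (d₂ a)^2) • (1:A) := by rw [smul_smul]; congr 1; ring
    have h2 : ∑ p : Fin n × Fin n, f p = ∑ x, (2 * (d₁ x)^2) • (1:A) := by
      rw [Fintype.sum_prod_type_right]
      refine Finset.sum_congr rfl fun x _ => ?_
      dsimp only [f]
      calc ∑ a, (2 * (d₁ x * d₂ a)) • e a x
          = ∑ a, (2 * d₁ x) • ((d₂ a) • e a x) := by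
            refine Finset.sum_congr rfl fun a _ => ?_
            rw [smul_smul]; congr 1; ring
        _ = (2 * d₁ x) • ((d₁ x) • (1:A)) := by rw [← Finset.smul_sum, ← hI x]
        _ = (2 * (d₁ x)^2) • (1:A) := by rw [smul_smul]; congr 1; ring
    rw [← h1, ← h2]
  have hsum_eq : ∑ p : Fin n × Fin n, f p = ∑ p : Fin n × Fin n, g p := by
    have hg : ∑ p : Fin n × Fin n, g p
        = ∑ x, ((d₁ x)^2) • (1:A) + ∑ a, ((d₂ a)^2) • (1:A) := by
      have : ∀ p : Fin n × Fin n, g p = ((d₁ p.2)^2) • e p.1 p.2 + ((d₂ p.1)^2) • e p.1 p.2 := by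
        intro p; rw [hgdef]; simp only []; rw [add_smul]
      rw [Finset.sum_congr rfl fun p _ => this p, Finset.sum_add_distrib]
      congr 1
      · rw [Fintype.sum_prod_type_right]
        refine Finset.sum_congr rfl fun x _ => ?_
        dsimp only
        rw [← Finset.smul_sum, hrow x]
      · rw [Fintype.sum_prod_type]
        refine Finset.sum_congr rfl fun a _ => ?_
        dsimp only
        rw [← Finset.smul_sum, hcol a]
    have hf : ∑ p : Fin n × Fin n, f p = ∑ x, (2 * (d₁ x)^2) • (1:A) := by
      rw [Fintype.sum_prod_type_right]
      refine Finset.sum_congr rfl fun x _ => ?_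
      dsimp only [f]
      calc ∑ a, (2 * (d₁ x * d₂ a)) • e a x
          = ∑ a, (2 * d₁ x) • ((d₂ a) • e a x) := by
            refine Finset.sum_congr rfl fun a _ => ?_
            rw [smul_smul]; congr 1; ring
        _ = (2 * d₁ x) • ((d₁ x) • (1:A)) := by rw [← Finset.smul_sum, ← hI x]
        _ = (2 * (d₁ x)^2) • (1:A) := by rw [smul_smul]; congr 1; ring
    rw [hf, hg]
    have e1 : ∑ x, (2 * (d₁ x)^2) • (1:A) = ∑ x, ((d₁ x)^2) • (1:A) + ∑ x, ((d₁ x)^2) • (1:A) := by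
      rw [← Finset.sum_add_distrib]
      refine Finset.sum_congr rfl fun x _ => ?_
      rw [← add_smul, two_mul]
    rw [e1]
    congr 1
    have e2 : ∑ a, (2 * (d₂ a)^2) • (1:A) = ∑ a, ((d₂ a)^2) • (1:A) + ∑ a, ((d₂ a)^2) • (1:A) := by
      rw [← Finset.sum_add_distrib]
      refine Finset.sum_congr rfl fun a _ => ?_
      rw [← add_smul, two_mul]
    -- from 2P = 2Q get P = Q via torsion-freeness over ℂ
    have h2eq : (2:ℕ) • (∑ x, ((d₁ x)^2) • (1:A)) = (2:ℕ) • (∑ a, ((d₂ a)^2) • (1:A)) := by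
      rw [two_smul, two_smul, ← e1, ← e2, hP2Q]
    have h2eq' : ((2:ℂ)) • (∑ x, ((d₁ x)^2) • (1:A)) = ((2:ℂ)) • (∑ a, ((d₂ a)^2) • (1:A)) := by
      rw [show ((2:ℂ)) = ((2:ℕ):ℂ) by norm_num, Nat.cast_smul_eq_nsmul, Nat.cast_smul_eq_nsmul]
      exact h2eq
    calc ∑ x, ((d₁ x)^2) • (1:A)
        = (2:ℂ)⁻¹ • ((2:ℂ) • ∑ x, ((d₁ x)^2) • (1:A)) := by
          rw [inv_smul_smul₀ (by norm_num)]
      _ = (2:ℂ)⁻¹ • ((2:ℂ) • ∑ a, ((d₂ a)^2) • (1:A)) := by rw [h2eq']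
      _ = ∑ a, ((d₂ a)^2) • (1:A) := by rw [inv_smul_smul₀ (by norm_num)]
  -- termwise equality
  have hterm : ∀ p : Fin n × Fin n, f p = g p := by
    intro p
    exact (Finset.sum_eq_sum_iff_of_le hfg_le).mp hsum_eq p (Finset.mem_univ p)
  -- e vanishes off the degree-matching pairs
  have hvanish : ∀ a x, d₁ x ≠ d₂ a → e a x = 0 := by
    intro a x hne
    have h := hterm (a, x)
    rw [hfdef, hgdef] at h
    simp only [] at h
    set c' : ℕ := 2 * (d₁ x * d₂ a) with hc'
    set c : ℕ := (d₁ x)^2 + (d₂ a)^2 with hc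
    have hlt : c' < c := by
      have hne' : (d₁ x : ℤ) ≠ (d₂ a : ℤ) := by exact_mod_cast hne
      have h0' : ((d₁ x : ℤ) - (d₂ a : ℤ)) ≠ 0 := sub_ne_zero.mpr hne'
      have hz : (0:ℤ) < ((d₁ x : ℤ) - (d₂ a : ℤ))^2 :=
        lt_of_le_of_ne (sq_nonneg _) (Ne.symm (pow_ne_zero 2 h0'))
      have : (2 * ((d₁ x : ℤ) * (d₂ a : ℤ))) < ((d₁ x : ℤ))^2 + ((d₂ a : ℤ))^2 := by nlinarith
      exact_mod_cast this
    have hD : c = c' + (c - c') := (Nat.add_sub_cancel' hlt.le).symm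
    have h0 : (c - c') • e a x = 0 := by
      have : c' • e a x + (c - c') • e a x = c' • e a x + 0 := by
        rw [add_zero, ← add_smul, ← hD, ← h]
      exact add_left_cancel this
    have hD0 : c - c' ≠ 0 := Nat.sub_ne_zero_of_lt hlt
    have h0' : ((c - c' : ℕ) : ℂ) • e a x = 0 := by
      rw [Nat.cast_smul_eq_nsmul]; exact h0
    have := congrArg (fun z => (((c - c' : ℕ) : ℂ))⁻¹ • z) h0'
    simpa [smul_smul, inv_mul_cancel₀ (show (((c - c' : ℕ)) : ℂ) ≠ 0 from
      Nat.cast_ne_zero.mpr hD0)] using this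
  -- final count
  intro k
  have hcount : ((Finset.univ.filter fun x : Fin n => d₁ x = k).card) • (1:A)
      = ((Finset.univ.filter fun a : Fin n => d₂ a = k).card) • (1:A) := by
    calc ((Finset.univ.filter fun x : Fin n => d₁ x = k).card) • (1:A)
        = ∑ x, (if d₁ x = k then 1 else 0 : ℕ) • (1:A) := by
          rw [← Finset.sum_smul, Finset.sum_boole]
          norm_num
      _ = ∑ x, ∑ a, (if d₁ x = k then 1 else 0 : ℕ) • e a x := by
          refine Finset.sum_congr rfl fun x _ => ?_
          rw [← Finset.smul_sum, hrow x]
      _ = ∑ x, ∑ a, (if d₂ a = k then 1 else 0 : ℕ) • e a x := by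
          refine Finset.sum_congr rfl fun x _ => Finset.sum_congr rfl fun a _ => ?_
          by_cases hax : d₁ x = d₂ a
          · rw [hax]
          · rw [hvanish a x hax, smul_zero, smul_zero]
      _ = ∑ a, (if d₂ a = k then 1 else 0 : ℕ) • (1:A) := by
          rw [Finset.sum_comm]
          refine Finset.sum_congr rfl fun a _ => ?_
          rw [← Finset.smul_sum, hcol a]
      _ = ((Finset.univ.filter fun a : Fin n => d₂ a = k).card) • (1:A) := by
          rw [← Finset.sum_smul, Finset.sum_boole]
          norm_num
  -- conclude in ℕ
  have hC : (((Finset.univ.filter fun x : Fin n => d₁ x = k).card : ℂ)) • (1:A)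
      = (((Finset.univ.filter fun a : Fin n => d₂ a = k).card : ℂ)) • (1:A) := by
    rw [Nat.cast_smul_eq_nsmul, Nat.cast_smul_eq_nsmul]; exact hcount
  have hinj : Function.Injective (algebraMap ℂ A) := RingHom.injective _
  have : (((Finset.univ.filter fun x : Fin n => d₁ x = k).card : ℂ))
      = (((Finset.univ.filter fun a : Fin n => d₂ a = k).card : ℂ)) := by
    apply hinj
    rw [Algebra.algebraMap_eq_smul_one, Algebra.algebraMap_eq_smul_one]
    exact hC
  exact_mod_cast this
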